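/- Let R be an integrally closed Noetherian domain, p₁,…,pₙ distinct height-one primes of R, J = p₁ ∩ ⋯ ∩ pₙ, and U = R ∖ (p₁ ∪ ⋯ ∪ pₙ). Then for every positive integer k, J^k R_U ∩ R = p₁^{(k)} ∩ ⋯ ∩ pₙ^{(k)}, where p^{(k)} = p^k R_p ∩ R denotes the k-th symbolic power. -/

import Mathlib

/-- A height-one prime ideal: a nonzero prime whose only strictly smaller prime is ⊥. -/
def IsHeightOnePrime {R : Type*} [CommRing R] (p : Ideal R) : Prop :=
  p.IsPrime ∧ p ≠ ⊥ ∧ ∀ q : Ideal R, q.IsPrime → q < p → q = ⊥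

/-- The m-th symbolic power `p^{(m)} = p^m R_p ∩ R` of a prime ideal `p`,
described elementwise. -/
def symbolicPower {R : Type*} [CommRing R] (p : Ideal R) (m : ℕ) : Set R :=
  {x | ∃ s, s ∉ p ∧ s * x ∈ p ^ m}

/-- A finite infimum of pairwise coprime ideals equals their product. -/
theorem aux_inf_eq_prod_of_coprime {ι : Type*} {S : Type*} [CommRing S] (Q : ι → Ideal S)
    (s : Finset ι) (h : ∀ i ∈ s, ∀ j ∈ s, i ≠ j → IsCoprime (Q i) (Q j)) :
    s.inf Q = s.prod Q := by
  classical
  induction s using Finset.induction with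
  | empty => simp
  | @insert a s ha ih =>
    rw [Finset.inf_insert, Finset.prod_insert ha,
      ← ih (fun i hi j hj hij => h _ (Finset.mem_insert_of_mem hi) _
        (Finset.mem_insert_of_mem hj) hij)]
    refine Ideal.inf_eq_mul_of_isCoprime ?_
    rw [Finset.inf_eq_iInf]
    exact Ideal.isCoprime_biInf fun j hj =>
      h a (Finset.mem_insert_self a s) j (Finset.mem_insert_of_mem hj)
        (fun h' => ha (h' ▸ hj))

/-- Let R be an integrally closed Noetherian domain, p₁,…,pₙ distinct
height-one primes, J = p₁ ∩ ⋯ ∩ pₙ, and U = R ∖ (p₁ ∪ ⋯ ∪ pₙ). Then for every k ≥ 1,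
J^k R_U ∩ R = p₁^{(k)} ∩ ⋯ ∩ pₙ^{(k)}. -/
theorem stmt13 {R : Type*} [CommRing R] [IsDomain R] [IsIntegrallyClosed R]
    [IsNoetherianRing R]
    {n : ℕ} (p : Fin n → Ideal R) (hpinj : Function.Injective p)
    (hp1 : ∀ i, IsHeightOnePrime (p i)) (hp : ∀ i, (p i).IsPrime)
    (J : Ideal R) (hJ : J = ⨅ i, p i)
    (U : Submonoid R) (hU : U = ⨅ i, @Ideal.primeCompl R _ (p i) (hp i))
    (k : ℕ) (hk : 0 < k) :
    (Ideal.comap (algebraMap R (Localization U))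
        (Ideal.map (algebraMap R (Localization U)) (J ^ k)) : Set R) =
      ⋂ i, symbolicPower (p i) k := by
  subst hJ
  set S := Localization U with hS
  set f := algebraMap R S with hf
  ext x
  simp only [SetLike.mem_coe, Set.mem_iInter, Ideal.mem_comap]
  rcases Nat.eq_zero_or_pos n with hn | hn
  · subst hn
    simp only [iInf_of_empty, Ideal.top_pow, Ideal.map_top]
    constructor
    · intro _ i; exact i.elim0
    · intro _; exact Submodule.mem_top
  · have i₀ : Fin n := ⟨0, hn⟩
    have hUle : ∀ i, U ≤ (p i).primeCompl := by
      intro i; rw [hU]; exact iInf_le _ i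
    have hdisj : ∀ i, Disjoint (U : Set R) (p i : Set R) := by
      intro i
      rw [Set.disjoint_left]
      intro s hs hmem
      exact hUle i hs hmem
    have hU0 : (0 : R) ∉ U := fun h => hUle i₀ h ((p i₀).zero_mem)
    have hUnz : U ≤ nonZeroDivisors R := fun s hs =>
      mem_nonZeroDivisors_of_ne_zero (by rintro rfl; exact hU0 hs)
    have hinj : Function.Injective f := IsLocalization.injective S hUnz
    set P : Fin n → Ideal S := fun i => Ideal.map f (p i) with hP
    have hPprime : ∀ i, (P i).IsPrime := fun i =>
      IsLocalization.isPrime_of_isPrime_disjoint U S (p i) (hp i) (hdisj i)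
    have hcomapP : ∀ i, Ideal.comap f (P i) = p i := fun i =>
      IsLocalization.comap_map_of_isPrime_disjoint U S (I := p i) (hp i) (hdisj i)
    -- each P i is maximal
    have hPmax : ∀ i, (P i).IsMaximal := by
      intro i
      rw [Ideal.isMaximal_def]
      refine ⟨(hPprime i).ne_top, fun Q hQ => ?_⟩
      by_contra hQtop
      obtain ⟨M, hM, hQM⟩ := Ideal.exists_le_maximal Q hQtop
      have hdisjM : Disjoint (U : Set R) ((Ideal.comap f M : Ideal R) : Set R) := by
        rw [Set.disjoint_left]
        intro u hu hmem
        exact hM.ne_top (Ideal.eq_top_of_isUnit_mem _ hmem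
          (IsLocalization.map_units S ⟨u, hu⟩))
      have hsub : ((Ideal.comap f M : Ideal R) : Set R) ⊆
          ⋃ j ∈ ((Finset.univ : Finset (Fin n)) : Set (Fin n)), ((p j : Ideal R) : Set R) := by
        intro r hr
        by_contra hr'
        have hrU : r ∈ U := by
          rw [hU, Submonoid.mem_iInf]
          intro j
          intro hrj
          exact hr' (Set.mem_biUnion (by simp) hrj)
        exact (Set.disjoint_left.mp hdisjM) hrU hr
      obtain ⟨j, _, hle⟩ :=
        (Ideal.subset_union_prime i₀ i₀ (fun j _ _ _ => hp j)).mp hsub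
      have hip : p i ≤ Ideal.comap f M := by
        rw [← hcomapP i]
        exact Ideal.comap_mono (le_trans (le_of_lt hQ) hQM)
      have hji : p j = p i := by
        by_contra hne
        have hlt : p i < p j := lt_of_le_of_ne (hip.trans hle) (fun h => hne h.symm)
        exact (hp1 i).2.1 ((hp1 j).2.2 _ (hp i) hlt)
      have hqe : Ideal.comap f M = p i := le_antisymm (hji ▸ hle) hip
      have hMP : M = P i := by
        rw [← IsLocalization.map_comap U S M]
        show Ideal.map f (Ideal.comap f M) = P i
        rw [hqe]
      exact absurd (hQM.trans_eq hMP) (not_le_of_gt hQ)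
    -- pairwise coprimality of powers
    have hPne : ∀ i j, i ≠ j → P i ≠ P j := fun i j hij h =>
      hij (hpinj (by rw [← hcomapP i, ← hcomapP j, h]))
    have hcop : ∀ i ∈ (Finset.univ : Finset (Fin n)), ∀ j ∈ (Finset.univ : Finset (Fin n)),
        i ≠ j → IsCoprime (P i ^ k) (P j ^ k) := fun i _ j _ hij =>
      (Ideal.isCoprime_iff_sup_eq.mpr
        ((hPmax i).coprime_of_ne (hPmax j) (hPne i j hij))).pow
    -- ⨅ i, P i ^ k ≤ map f ((⨅ i, p i) ^ k)
    have hkey : (⨅ i, P i ^ k) ≤ Ideal.map f ((⨅ i, p i) ^ k) := by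
      have h1 : (⨅ i, P i ^ k) = (Finset.univ : Finset (Fin n)).inf (fun i => P i ^ k) := by
        rw [Finset.inf_eq_iInf]
        simp
      rw [h1, aux_inf_eq_prod_of_coprime _ _ hcop]
      have h2 : Ideal.map f ((Finset.univ : Finset (Fin n)).prod (fun i => p i ^ k)) =
          (Finset.univ : Finset (Fin n)).prod (fun i => P i ^ k) := by
        rw [show Ideal.map f ((Finset.univ : Finset (Fin n)).prod (fun i => p i ^ k)) =
          Ideal.mapHom f ((Finset.univ : Finset (Fin n)).prod (fun i => p i ^ k)) from rfl,
          map_prod]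
        exact Finset.prod_congr rfl fun i _ => Ideal.map_pow f (p i) k
      rw [← h2]
      refine Ideal.map_mono ?_
      rw [Finset.prod_pow]
      refine Ideal.pow_right_mono ?_ k
      refine le_trans Ideal.prod_le_inf ?_
      rw [Finset.inf_eq_iInf]
      simp
    constructor
    · -- forward: x ∈ J^k R_U ∩ R ⟹ x in each symbolic power
      intro hx i
      obtain ⟨⟨a, u⟩, h⟩ := (IsLocalization.mem_map_algebraMap_iff U S).mp hx
      have hxu : x * (u : R) = (a : R) := by
        apply hinj
        rw [map_mul]
        exact h
      refine ⟨(u : R), fun hmem => hUle i u.2 hmem, ?_⟩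
      have ha : (a : R) ∈ (⨅ i, p i) ^ k := a.2
      rw [mul_comm, hxu]
      exact Ideal.pow_right_mono (iInf_le _ i) k ha
    · -- backward
      intro h
      have hx : ∀ i, f x ∈ P i ^ k := by
        intro i
        obtain ⟨s, hs, hsx⟩ := h i
        have hmem : f x * f s ∈ P i ^ k := by
          rw [← map_mul, mul_comm]
          have : Ideal.map f (p i ^ k) = P i ^ k := by
            rw [hP]; exact Ideal.map_pow f (p i) k
          rw [← this]
          exact Ideal.mem_map_of_mem f hsx
        have hprim : (P i ^ k).IsPrimary :=
          Ideal.isPrimary_of_isMaximal_radical (by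
            rw [Ideal.radical_pow _ hk.ne', (hPprime i).radical]
            exact hPmax i)
        rcases (Ideal.isPrimary_iff.mp hprim).2 hmem with h1 | h1
        · exact h1
        · exfalso
          rw [Ideal.radical_pow _ hk.ne', (hPprime i).radical] at h1
          exact hs (by rw [← hcomapP i]; exact h1)
      exact hkey (by rw [Ideal.mem_iInf]; exact hx)
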